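/- (List recovery capacity theorem, achievability.) Let R ∈ (0,1), let ℓ ≥ 1 and L ≥ ℓ be integers, let η > 0 satisfy η ≥ 4ℓ/L and R + η ≤ 1, and let q be a prime power with q ≥ ℓ^{2/η}. Then for all sufficiently large n there exists a code C ⊆ F_q^n with |C| ≥ q^{Rn} which is (R + η, ℓ, L)-list recoverable from erasures. -/

import Mathlib

open Finset

/-- A code `C ⊆ Fⁿ` (here indexed by a finite type `ι`, over a finite alphabet `F`) is
`(α, ℓ, L)`-list recoverable from erasures: for every family of sets `S i ⊆ F` such that
there is a set `T` with `|T| ≥ α·|ι|`, `|S i| ≤ ℓ` for `i ∈ T` and `S i = F` for `i ∉ T`,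
there are at most `L` codewords `c ∈ C` with `c i ∈ S i` for all `i`. -/
def ListRecoverableErasures {ι F : Type*} [Fintype ι] [Fintype F]
    (C : Set (ι → F)) (α : ℝ) (ℓ L : ℕ) : Prop :=
  ∀ (S : ι → Finset F) (T : Finset ι),
    α * (Fintype.card ι : ℝ) ≤ (T.card : ℝ) →
    (∀ i ∈ T, (S i).card ≤ ℓ) →
    (∀ i ∉ T, S i = Finset.univ) →
    {c ∈ C | ∀ i, c i ∈ S i}.ncard ≤ L


private lemma le_image_add_pairs {V : Type*} [DecidableEq V] {M : ℕ} (x : Fin M → V) :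
    M ≤ (Finset.univ.image x).card +
      (Finset.univ.offDiag.filter fun p : Fin M × Fin M => x p.1 = x p.2).card := by
  classical
  set rep : Fin M → Fin M := fun i =>
    (univ.filter fun k => x k = x i).min' ⟨i, by simp⟩ with hrep
  have hrep_mem : ∀ i, rep i ∈ univ.filter fun k => x k = x i := fun i =>
    Finset.min'_mem _ _
  have hrep_eq : ∀ i, x (rep i) = x i := fun i => (Finset.mem_filter.mp (hrep_mem i)).2
  have hfix : (univ.filter fun i => rep i = i).card ≤ (univ.image x).card := by
    apply Finset.card_le_card_of_injOn x
    · intro i _; exact mem_image_of_mem x (mem_univ i)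
    · intro i hi j hj hxij
      have hsets : (univ.filter fun k => x k = x i) = (univ.filter fun k => x k = x j) := by
        apply filter_congr; intro k _; simp only [hxij]
      have : rep i = rep j := by simp only [hrep, hsets]
      have hi' := (Finset.mem_filter.mp hi).2
      have hj' := (Finset.mem_filter.mp hj).2
      rw [← hi', ← hj', this]
  have hmov : (univ.filter fun i => ¬ rep i = i).card ≤
      (Finset.univ.offDiag.filter fun p : Fin M × Fin M => x p.1 = x p.2).card := by
    apply Finset.card_le_card_of_injOn (fun i => (rep i, i))
    · intro i hi
      have hne : rep i ≠ i := (Finset.mem_filter.mp hi).2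
      refine Finset.mem_filter.mpr ⟨Finset.mem_offDiag.mpr ⟨mem_univ _, mem_univ _, hne⟩, ?_⟩
      exact hrep_eq i
    · intro i _ j _ h
      exact (Prod.mk.injEq _ _ _ _).mp h |>.2
  calc M = (Fintype.card (Fin M)) := (Fintype.card_fin M).symm
  _ = (univ.filter fun i => rep i = i).card + (univ.filter fun i => ¬ rep i = i).card := by
      rw [Finset.card_filter_add_card_filter_not, Finset.card_univ]
  _ ≤ _ := Nat.add_le_add hfix hmov

private lemma card_pair_filter_le {V : Type*} [Fintype V] [DecidableEq V] {M : ℕ}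
    {i j : Fin M} (hij : i ≠ j) :
    (Finset.univ.filter fun x : Fin M → V => x i = x j).card ≤ Fintype.card V ^ (M - 1) := by
  classical
  have : (Finset.univ.filter fun x : Fin M → V => x i = x j).card ≤
      (Finset.univ : Finset ({k : Fin M // k ≠ j} → V)).card := by
    apply Finset.card_le_card_of_injOn (fun x (k : {k : Fin M // k ≠ j}) => x k.1)
    · intro _ _; exact mem_univ _
    · intro x hx y hy h
      have hx' := (Finset.mem_filter.mp hx).2
      have hy' := (Finset.mem_filter.mp hy).2
      funext k
      by_cases hk : k = j
      · subst hk
        rw [← hx', ← hy']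
        exact congrFun h ⟨i, hij⟩
      · exact congrFun h ⟨k, hk⟩
  refine this.trans ?_
  rw [Finset.card_univ, Fintype.card_fun]
  have : Fintype.card {k : Fin M // k ≠ j} = M - 1 := by
    rw [Fintype.card_subtype_compl, Fintype.card_subtype_eq, Fintype.card_fin]
  rw [this]

private lemma sum_pairs_le {V : Type*} [Fintype V] [DecidableEq V] {M : ℕ} :
    ∑ x : Fin M → V,
      (Finset.univ.offDiag.filter fun p : Fin M × Fin M => x p.1 = x p.2).card ≤
      (M * M - M) * Fintype.card V ^ (M - 1) := by
  classical
  have h1 : ∀ x : Fin M → V,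
      (Finset.univ.offDiag.filter fun p : Fin M × Fin M => x p.1 = x p.2).card =
      ∑ p ∈ ((Finset.univ : Finset (Fin M)).offDiag),
        (if x p.1 = x p.2 then 1 else 0) := fun x => Finset.card_filter _ _
  calc ∑ x : Fin M → V, (Finset.univ.offDiag.filter
          fun p : Fin M × Fin M => x p.1 = x p.2).card
      = ∑ x : Fin M → V, ∑ p ∈ ((Finset.univ : Finset (Fin M)).offDiag),
          (if x p.1 = x p.2 then 1 else 0) := by simp only [h1]
    _ = ∑ p ∈ ((Finset.univ : Finset (Fin M)).offDiag), ∑ x : Fin M → V,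
          (if x p.1 = x p.2 then 1 else 0) := Finset.sum_comm
    _ = ∑ p ∈ ((Finset.univ : Finset (Fin M)).offDiag),
          (Finset.univ.filter fun x : Fin M → V => x p.1 = x p.2).card := by
        refine Finset.sum_congr rfl fun p _ => ?_
        rw [Finset.card_filter]
    _ ≤ ((Finset.univ : Finset (Fin M)).offDiag).card * Fintype.card V ^ (M - 1) := by
        apply Finset.sum_le_card_nsmul
        intro p hp
        exact card_pair_filter_le (Finset.mem_offDiag.mp hp).2.2
    _ = (M * M - M) * Fintype.card V ^ (M - 1) := by
        rw [Finset.offDiag_card, Finset.card_univ, Fintype.card_fin]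


private lemma badProd_card_le {F : Type*} [Fintype F] [DecidableEq F] {n M ℓ t : ℕ}
    (I : Finset (Fin M)) (T : Finset (Fin n)) (S : Fin n → Finset F)
    (hT : T.card = t) (hS : ∀ j ∈ T, (S j).card ≤ ℓ) :
    (Fintype.piFinset fun i : Fin M => Fintype.piFinset fun j : Fin n =>
        if i ∈ I ∧ j ∈ T then S j else Finset.univ).card
      ≤ (ℓ ^ t * Fintype.card F ^ (n - t)) ^ I.card *
        (Fintype.card F ^ n) ^ (M - I.card) := by
  classical
  rw [Fintype.card_piFinset]
  have hinner : ∀ i : Fin M,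
      (Fintype.piFinset fun j : Fin n =>
        if i ∈ I ∧ j ∈ T then S j else Finset.univ).card =
      ∏ j : Fin n, (if i ∈ I ∧ j ∈ T then (S j).card else Fintype.card F) := by
    intro i
    rw [Fintype.card_piFinset]
    refine Finset.prod_congr rfl fun j _ => ?_
    by_cases h : i ∈ I ∧ j ∈ T <;> simp [h]
  have hin : ∀ i ∈ I, (Fintype.piFinset fun j : Fin n =>
        if i ∈ I ∧ j ∈ T then S j else Finset.univ).card ≤
      ℓ ^ t * Fintype.card F ^ (n - t) := by
    intro i hi
    rw [hinner i]
    have : ∀ j : Fin n, (if i ∈ I ∧ j ∈ T then (S j).card else Fintype.card F) =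
        (if j ∈ T then (S j).card else Fintype.card F) := by
      intro j; by_cases h : j ∈ T <;> simp [h, hi]
    simp only [this]
    rw [← Finset.prod_mul_prod_compl T]
    have h1 : ∏ j ∈ T, (if j ∈ T then (S j).card else Fintype.card F) ≤ ℓ ^ t := by
      rw [← hT]
      apply Finset.prod_le_pow_card
      intro j hj; simp only [hj, if_true]; exact hS j hj
    have h2 : ∏ j ∈ Tᶜ, (if j ∈ T then (S j).card else Fintype.card F) =
        Fintype.card F ^ (n - t) := by
      have : ∏ j ∈ Tᶜ, (if j ∈ T then (S j).card else Fintype.card F) =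
          ∏ _j ∈ Tᶜ, Fintype.card F :=
        Finset.prod_congr rfl (fun j hj => by
          simp only [Finset.mem_compl.mp hj, if_false])
      rw [this, Finset.prod_const, Finset.card_compl, Fintype.card_fin, hT]
    rw [h2]
    exact Nat.mul_le_mul_right _ h1
  have hout : ∀ i : Fin M, i ∉ I → (Fintype.piFinset fun j : Fin n =>
        if i ∈ I ∧ j ∈ T then S j else Finset.univ).card = Fintype.card F ^ n := by
    intro i hi
    rw [hinner i]
    have : (∏ j : Fin n, if i ∈ I ∧ j ∈ T then (S j).card else Fintype.card F) =
        ∏ _j : Fin n, Fintype.card F :=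
      Finset.prod_congr rfl (fun j _ => by simp [hi])
    rw [this, Finset.prod_const, Finset.card_univ, Fintype.card_fin]
  rw [← Finset.prod_mul_prod_compl I]
  have hA : ∏ i ∈ I, (Fintype.piFinset fun j : Fin n =>
        if i ∈ I ∧ j ∈ T then S j else Finset.univ).card ≤
      (ℓ ^ t * Fintype.card F ^ (n - t)) ^ I.card :=
    Finset.prod_le_pow_card _ _ _ hin
  have hB : ∏ i ∈ Iᶜ, (Fintype.piFinset fun j : Fin n =>
        if i ∈ I ∧ j ∈ T then S j else Finset.univ).card =
      (Fintype.card F ^ n) ^ (M - I.card) := by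
    have : ∏ i ∈ Iᶜ, (Fintype.piFinset fun j : Fin n =>
          if i ∈ I ∧ j ∈ T then S j else Finset.univ).card =
        ∏ _i ∈ Iᶜ, Fintype.card F ^ n :=
      Finset.prod_congr rfl (fun i hi => hout i (Finset.mem_compl.mp hi))
    rw [this, Finset.prod_const, Finset.card_compl, Fintype.card_fin]
  rw [hB]
  exact Nat.mul_le_mul_right _ hA



private lemma exponent_key (R η l LL N Tt : ℝ)
    (hR0 : 0 < R) (hRη : R + η ≤ 1) (hη : 0 < η) (hl : 1 ≤ l) (hLL : 1 ≤ LL)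
    (h4l : 4 * l ≤ LL * η) (hN0 : 0 ≤ N)
    (hTge : (R + η) * N ≤ Tt) (h1 : 2 * LL + 3 ≤ N * η / 2) :
    2 * l * N + 2 * (LL + 1) + 1 ≤ (LL + 1) * (Tt * (1 - η / 2) - R * N) := by
  have e1 : (0 : ℝ) ≤ 1 - η / 2 := by linarith
  have k1 : (R + η) * N * (1 - η / 2) ≤ Tt * (1 - η / 2) :=
    mul_le_mul_of_nonneg_right hTge e1
  have k2 : (η / 2) * N ≤ (R + η) * N * (1 - η / 2) - R * N := by
    nlinarith [mul_nonneg (mul_nonneg (half_pos hη).le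
      (by linarith : (0 : ℝ) ≤ 1 - (R + η))) hN0]
  have k3 : (η / 2) * N ≤ Tt * (1 - η / 2) - R * N := by linarith
  have k4 : 2 * l + η / 2 ≤ (LL + 1) * (η / 2) := by linarith
  have hLL0 : (0 : ℝ) ≤ LL + 1 := by linarith
  have k5 : (LL + 1) * ((η / 2) * N) ≤ (LL + 1) * (Tt * (1 - η / 2) - R * N) :=
    mul_le_mul_of_nonneg_left k3 hLL0
  have k6 : (2 * l + η / 2) * N ≤ ((LL + 1) * (η / 2)) * N :=
    mul_le_mul_of_nonneg_right k4 hN0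
  nlinarith [k5, k6, h1]

private lemma exponent_E (R η l LL N Tt MM : ℝ)
    (hR0 : 0 < R) (hRη : R + η ≤ 1) (hη : 0 < η) (hl : 1 ≤ l) (hLL : 1 ≤ LL)
    (h4l : 4 * l ≤ LL * η) (hN0 : 0 ≤ N)
    (hTge : (R + η) * N ≤ Tt) (h1 : 2 * LL + 3 ≤ N * η / 2) :
    N + (2 * l - 1) * N + (R * N + 2) * (LL + 1) +
      ((η / 2) * Tt + (N - Tt)) * (LL + 1) + N * (MM - (LL + 1)) ≤ N * MM - 1 := by
  have key := exponent_key R η l LL N Tt hR0 hRη hη hl hLL h4l hN0 hTge h1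
  nlinarith [key]

private lemma exponent_A (R η N MM : ℝ) (hRη : R + η ≤ 1) (hN0 : 0 ≤ N)
    (h2 : 5 ≤ N * η) (hMM : 1 ≤ MM) :
    R * N + 3 + N * (MM - 1) ≤ N * MM - 2 := by
  have hRN : R * N ≤ (1 - η) * N := mul_le_mul_of_nonneg_right (by linarith) hN0
  nlinarith [hRN, h2]

set_option maxHeartbeats 2000000 in
private lemma main_exists
    (F : Type) [Field F] [Fintype F] [DecidableEq F]
    (R η : ℝ) (hR0 : 0 < R) (hR1 : R < 1)
    (ℓ L : ℕ) (hℓ : 1 ≤ ℓ) (hL : ℓ ≤ L)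
    (hη : 0 < η) (hηL : (4 * ℓ : ℝ) / L ≤ η) (hRη : R + η ≤ 1)
    (hq : (ℓ : ℝ) ^ ((2 : ℝ) / η) ≤ (Fintype.card F : ℝ))
    (n : ℕ)
    (h1 : (2 * L + 3 : ℝ) ≤ n * η / 2)
    (h2 : (5 : ℝ) ≤ n * η)
    (h3 : (L + 1 : ℝ) ≤ (Fintype.card F : ℝ) ^ (R * n)) :
    ∃ C : Set (Fin n → F),
      (Fintype.card F : ℝ) ^ (R * n) ≤ (C.ncard : ℝ) ∧
      ListRecoverableErasures C (R + η) ℓ L := by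
  classical
  set q : ℕ := Fintype.card F with hqdef
  have hq1 : 1 < q := Fintype.one_lt_card
  have hq2 : 2 ≤ q := hq1
  set Q : ℝ := (q : ℝ) with hQdef
  have hQ0 : (0 : ℝ) < Q := by positivity
  have hQ1 : (1 : ℝ) < Q := by rw [hQdef]; exact_mod_cast hq1
  have hQ2 : (2 : ℝ) ≤ Q := by rw [hQdef]; exact_mod_cast hq2
  have hηle : η ≤ 1 := by linarith
  have hn0 : 0 < n := by
    by_contra h
    push_neg at h
    interval_cases n <;> simp_all <;> nlinarith
  have hN0 : (0 : ℝ) ≤ (n : ℝ) := Nat.cast_nonneg n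
  -- ℓ ≤ Q ^ (η/2)
  have hℓQ : (ℓ : ℝ) ≤ Q ^ (η / 2) := by
    have h0 : (0 : ℝ) ≤ (ℓ : ℝ) := Nat.cast_nonneg ℓ
    have := Real.rpow_le_rpow (by positivity) hq (le_of_lt (half_pos hη))
    rwa [← Real.rpow_mul h0, div_mul_div_comm, mul_comm η 2, div_self (by positivity),
      Real.rpow_one] at this
  -- parameters
  set t : ℕ := ⌈(R + η) * n⌉₊ with htdef
  set m : ℕ := ⌈Q ^ (R * n)⌉₊ with hmdef
  set M : ℕ := 2 * m with hMdef
  have hrpow1 : (1 : ℝ) ≤ Q ^ (R * n) := by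
    rw [show (1:ℝ) = Q ^ (0:ℝ) by rw [Real.rpow_zero]]
    exact Real.rpow_le_rpow_of_exponent_le (le_of_lt hQ1) (by positivity)
  have hm1 : 1 ≤ m := by
    rw [hmdef]
    exact Nat.one_le_iff_ne_zero.mpr (by
      intro h
      have := Nat.le_ceil (Q ^ (R * n))
      rw [h] at this
      simp at this
      linarith)
  have hmge : Q ^ (R * n) ≤ (m : ℝ) := Nat.le_ceil _
  have hmle : (m : ℝ) ≤ 2 * Q ^ (R * n) := by
    have := Nat.ceil_lt_add_one (show (0:ℝ) ≤ Q ^ (R * n) by positivity)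
    rw [← hmdef] at this
    linarith
  have hLm : L + 1 ≤ m := by
    have : ((L : ℝ) + 1) ≤ (m : ℝ) := le_trans h3 hmge
    exact_mod_cast this
  have hLM : L + 1 ≤ M := le_trans hLm (by omega)
  have htn : t ≤ n := by
    rw [htdef]
    apply Nat.ceil_le.mpr
    calc (R + η) * n ≤ 1 * n := by
          apply mul_le_mul_of_nonneg_right hRη hN0
      _ = (n : ℕ) := by rw [one_mul]
  have htge : (R + η) * n ≤ (t : ℝ) := Nat.le_ceil _
  -- the good property
  set Bad1 : Finset (Fin M → Fin n → F) :=
    Finset.univ.filter fun x => (Finset.univ.image x).card < m with hBad1def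
  set Bad2 : Finset (Fin M → Fin n → F) :=
    Finset.univ.filter (fun x => ∃ (T : Finset (Fin n)) (S : Fin n → Finset F),
      t ≤ T.card ∧ (∀ j ∈ T, (S j).card ≤ ℓ) ∧
      L < (Finset.univ.filter fun i : Fin M => ∀ j ∈ T, x i j ∈ S j).card) with hBad2def
  have hcardV : Fintype.card (Fin n → F) = q ^ n := by
    rw [Fintype.card_fun, Fintype.card_fin]
  -- Step 1 : Bad1 bound
  have hBad1 : Bad1.card ≤ 4 * m * (q ^ n) ^ (M - 1) := by
    have key : Bad1.card * (m + 1) ≤ (M * M - M) * (q ^ n) ^ (M - 1) := by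
      calc Bad1.card * (m + 1) = Bad1.card • (m + 1) := by rw [smul_eq_mul]
        _ ≤ ∑ x ∈ Bad1, ((Finset.univ : Finset (Fin M)).offDiag.filter
              fun p : Fin M × Fin M => x p.1 = x p.2).card := by
            apply Finset.card_nsmul_le_sum
            intro x hx
            have himg : (Finset.univ.image x).card < m :=
              (Finset.mem_filter.mp hx).2
            have := le_image_add_pairs x
            omega
        _ ≤ ∑ x : Fin M → Fin n → F,
              ((Finset.univ : Finset (Fin M)).offDiag.filter
                fun p : Fin M × Fin M => x p.1 = x p.2).card :=
            Finset.sum_le_sum_of_subset (Finset.subset_univ _)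
        _ ≤ (M * M - M) * Fintype.card (Fin n → F) ^ (M - 1) := sum_pairs_le
        _ = (M * M - M) * (q ^ n) ^ (M - 1) := by rw [hcardV]
    have h4 : (M * M - M) * (q ^ n) ^ (M - 1) ≤
        (4 * m * (q ^ n) ^ (M - 1)) * (m + 1) := by
      have : M * M - M ≤ 4 * m * (m + 1) := by
        rw [hMdef]; ring_nf; omega
      calc (M * M - M) * (q ^ n) ^ (M - 1) ≤ (4 * m * (m + 1)) * (q ^ n) ^ (M - 1) :=
            Nat.mul_le_mul_right _ this
        _ = (4 * m * (q ^ n) ^ (M - 1)) * (m + 1) := by ring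
    exact Nat.le_of_mul_le_mul_right (le_trans key h4) (Nat.succ_pos m)
  -- Step 2 : Bad2 bound
  set 𝒯 : Finset (Finset (Fin n)) := Finset.powersetCard t Finset.univ with h𝒯def
  set 𝒮 : Finset (Fin n → Finset F) :=
    Finset.univ.filter fun S => ∀ j, 0 < (S j).card ∧ (S j).card ≤ ℓ with h𝒮def
  set 𝓘 : Finset (Finset (Fin M)) := Finset.powersetCard (L + 1) Finset.univ with h𝓘def
  set badF : Finset (Fin n) × (Fin n → Finset F) × Finset (Fin M) →
      Finset (Fin M → Fin n → F) := fun p =>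
    Fintype.piFinset fun i : Fin M => Fintype.piFinset fun j : Fin n =>
      if i ∈ p.2.2 ∧ j ∈ p.1 then p.2.1 j else Finset.univ with hbadFdef
  have hsub : Bad2 ⊆ (𝒯 ×ˢ 𝒮 ×ˢ 𝓘).biUnion badF := by
    intro x hx
    obtain ⟨T₀, S₀, ht₀, hs₀, hcard₀⟩ := (Finset.mem_filter.mp hx).2
    obtain ⟨T, hTsub, hTcard⟩ := Finset.exists_subset_card_eq ht₀
    obtain ⟨I, hIsub, hIcard⟩ := Finset.exists_subset_card_eq
      (show L + 1 ≤ (Finset.univ.filter fun i : Fin M =>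
        ∀ j ∈ T₀, x i j ∈ S₀ j).card from hcard₀)
    have hInonempty : I.Nonempty := Finset.card_pos.mp (by omega)
    obtain ⟨i₀, hi₀⟩ := hInonempty
    have hi₀' : ∀ j ∈ T₀, x i₀ j ∈ S₀ j := (Finset.mem_filter.mp (hIsub hi₀)).2
    set S : Fin n → Finset F := fun j => if j ∈ T then S₀ j else {0} with hSdef
    refine Finset.mem_biUnion.mpr ⟨(T, S, I), ?_, ?_⟩
    · apply Finset.mem_product.mpr
      refine ⟨?_, Finset.mem_product.mpr ⟨?_, ?_⟩⟩
      · exact Finset.mem_powersetCard.mpr ⟨Finset.subset_univ _, hTcard⟩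
      · apply Finset.mem_filter.mpr
        refine ⟨Finset.mem_univ _, fun j => ?_⟩
        rw [hSdef]
        by_cases hj : j ∈ T
        · simp only [hj, if_true]
          exact ⟨Finset.card_pos.mpr ⟨x i₀ j, hi₀' j (hTsub hj)⟩, hs₀ j (hTsub hj)⟩
        · simp only [hj, if_false]
          simp [hℓ]
      · exact Finset.mem_powersetCard.mpr ⟨Finset.subset_univ _, hIcard⟩
    · rw [hbadFdef]
      apply Fintype.mem_piFinset.mpr
      intro i
      apply Fintype.mem_piFinset.mpr
      intro j
      by_cases h : i ∈ I ∧ j ∈ T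
      · simp only [h, and_self, if_true]
        have := (Finset.mem_filter.mp (hIsub h.1)).2
        rw [hSdef]
        simp only [h.2, if_true]
        exact this j (hTsub h.2)
      · simp only [h, if_false]
        exact Finset.mem_univ _
  have hBad2 : Bad2.card ≤ (2 ^ n * ((ℓ * q ^ ℓ) ^ n * (2 * m) ^ (L + 1))) *
      ((ℓ ^ t * q ^ (n - t)) ^ (L + 1) * (q ^ n) ^ (M - (L + 1))) := by
    calc Bad2.card ≤ ((𝒯 ×ˢ 𝒮 ×ˢ 𝓘).biUnion badF).card := Finset.card_le_card hsub
      _ ≤ ∑ p ∈ 𝒯 ×ˢ 𝒮 ×ˢ 𝓘, (badF p).card := Finset.card_biUnion_le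
      _ ≤ (𝒯 ×ˢ 𝒮 ×ˢ 𝓘).card *
            ((ℓ ^ t * q ^ (n - t)) ^ (L + 1) * (q ^ n) ^ (M - (L + 1))) := by
          apply Finset.sum_le_card_nsmul
          intro p hp
          have hpT := (Finset.mem_product.mp hp).1
          have hpS := (Finset.mem_product.mp (Finset.mem_product.mp hp).2).1
          have hpI := (Finset.mem_product.mp (Finset.mem_product.mp hp).2).2
          have hTt : p.1.card = t := (Finset.mem_powersetCard.mp hpT).2
          have hSl : ∀ j ∈ p.1, (p.2.1 j).card ≤ ℓ := fun j _ =>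
            ((Finset.mem_filter.mp hpS).2 j).2
          have hIc : p.2.2.card = L + 1 := (Finset.mem_powersetCard.mp hpI).2
          have := badProd_card_le p.2.2 p.1 p.2.1 hTt hSl
          rw [hIc] at this
          exact this
      _ ≤ (2 ^ n * ((ℓ * q ^ ℓ) ^ n * (2 * m) ^ (L + 1))) *
            ((ℓ ^ t * q ^ (n - t)) ^ (L + 1) * (q ^ n) ^ (M - (L + 1))) := by
          apply Nat.mul_le_mul_right
          rw [Finset.card_product, Finset.card_product]
          have hT : 𝒯.card ≤ 2 ^ n := by
            calc 𝒯.card ≤ (Finset.univ : Finset (Fin n)).powerset.card :=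
                  Finset.card_le_card (fun s hs =>
                    Finset.mem_powerset.mpr (Finset.mem_powersetCard.mp hs).1)
              _ = 2 ^ n := by rw [Finset.card_powerset, Finset.card_univ, Fintype.card_fin]
          have hS : 𝒮.card ≤ (ℓ * q ^ ℓ) ^ n := by
            have hsubS : 𝒮 ⊆ Fintype.piFinset fun _ : Fin n =>
                (Finset.univ : Finset (Finset F)).filter
                  fun s => 0 < s.card ∧ s.card ≤ ℓ := by
              intro S hS
              apply Fintype.mem_piFinset.mpr
              intro j
              exact Finset.mem_filter.mpr ⟨Finset.mem_univ _,
                (Finset.mem_filter.mp hS).2 j⟩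
            calc 𝒮.card ≤ _ := Finset.card_le_card hsubS
              _ = ((Finset.univ : Finset (Finset F)).filter
                    fun s => 0 < s.card ∧ s.card ≤ ℓ).card ^ n := by
                  rw [Fintype.card_piFinset]
                  simp [Finset.prod_const, Finset.card_univ]
              _ ≤ (ℓ * q ^ ℓ) ^ n := by
                  apply Nat.pow_le_pow_left
                  have hA : ((Finset.univ : Finset (Finset F)).filter
                      fun s => 0 < s.card ∧ s.card ≤ ℓ) ⊆
                      (Finset.Icc 1 ℓ).biUnion fun k =>
                        Finset.powersetCard k Finset.univ := by
                    intro s hs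
                    obtain ⟨h1', h2'⟩ := (Finset.mem_filter.mp hs).2
                    apply Finset.mem_biUnion.mpr
                    exact ⟨s.card, Finset.mem_Icc.mpr ⟨h1', h2'⟩,
                      Finset.mem_powersetCard.mpr ⟨Finset.subset_univ _, rfl⟩⟩
                  calc _ ≤ _ := Finset.card_le_card hA
                    _ ≤ ∑ k ∈ Finset.Icc 1 ℓ,
                          (Finset.powersetCard k (Finset.univ : Finset F)).card :=
                        Finset.card_biUnion_le
                    _ ≤ (Finset.Icc 1 ℓ).card * q ^ ℓ := by
                        apply Finset.sum_le_card_nsmul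
                        intro k hk
                        rw [Finset.card_powersetCard, Finset.card_univ]
                        calc q.choose k ≤ q ^ k := Nat.choose_le_pow q k
                          _ ≤ q ^ ℓ := Nat.pow_le_pow_right (by omega)
                              (Finset.mem_Icc.mp hk).2
                    _ = ℓ * q ^ ℓ := by rw [Nat.card_Icc]; simp
          have hI : 𝓘.card ≤ (2 * m) ^ (L + 1) := by
            rw [h𝓘def, Finset.card_powersetCard, Finset.card_univ, Fintype.card_fin]
            calc M.choose (L + 1) ≤ M ^ (L + 1) := Nat.choose_le_pow M (L + 1)
              _ = (2 * m) ^ (L + 1) := by rw [hMdef]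
          exact Nat.mul_le_mul hT (Nat.mul_le_mul hS hI)

  -- Step 3 : real-number comparison
  have hQpow : ∀ k : ℕ, ((q ^ k : ℕ) : ℝ) = Q ^ ((k : ℕ) : ℝ) := by
    intro k; rw [Nat.cast_pow, Real.rpow_natCast]
  have hM1 : 1 ≤ M := by omega
  have hTotalcard : (((Finset.univ : Finset (Fin M → Fin n → F)).card : ℕ) : ℝ) =
      Q ^ ((n * M : ℕ) : ℝ) := by
    rw [Finset.card_univ, Fintype.card_fun, hcardV, Fintype.card_fin, ← pow_mul, hQpow]
  have hA : (Bad1.card : ℝ) < Q ^ ((n * M : ℕ) : ℝ) / 2 := by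
    have c2 : 4 * (m : ℝ) ≤ Q ^ (R * n + 3) := by
      have h8 : (8 : ℝ) ≤ Q ^ (3 : ℝ) := by
        calc (8 : ℝ) = 2 ^ (3 : ℕ) := by norm_num
          _ ≤ Q ^ (3 : ℕ) := pow_le_pow_left₀ (by norm_num) hQ2 3
          _ = Q ^ (3 : ℝ) := (Real.rpow_natCast Q 3).symm
      calc 4 * (m : ℝ) ≤ 8 * Q ^ (R * n) := by linarith only [hmle, hrpow1]
        _ ≤ Q ^ (3 : ℝ) * Q ^ (R * n) := mul_le_mul_of_nonneg_right h8 (by positivity)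
        _ = Q ^ (R * n + 3) := by rw [← Real.rpow_add hQ0]; ring_nf
    calc (Bad1.card : ℝ) ≤ ((4 * m * (q ^ n) ^ (M - 1) : ℕ) : ℝ) := Nat.cast_le.mpr hBad1
      _ = 4 * (m : ℝ) * ((q ^ (n * (M - 1)) : ℕ) : ℝ) := by rw [pow_mul]; push_cast; ring
      _ = 4 * (m : ℝ) * Q ^ ((n * (M - 1) : ℕ) : ℝ) := by rw [hQpow]
      _ ≤ Q ^ (R * n + 3) * Q ^ ((n * (M - 1) : ℕ) : ℝ) :=
          mul_le_mul_of_nonneg_right c2 (by positivity)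
      _ = Q ^ (R * n + 3 + ((n * (M - 1) : ℕ) : ℝ)) := (Real.rpow_add hQ0 _ _).symm
      _ ≤ Q ^ (((n * M : ℕ) : ℝ) - 2) := by
          apply Real.rpow_le_rpow_of_exponent_le hQ1.le
          have hcast : ((n * (M - 1) : ℕ) : ℝ) = (n : ℝ) * ((M : ℝ) - 1) := by
            push_cast [Nat.cast_sub hM1]; ring
          have hcast2 : ((n * M : ℕ) : ℝ) = (n : ℝ) * (M : ℝ) := by push_cast; ring
          have hRN : R * (n : ℝ) ≤ (1 - η) * n :=
            mul_le_mul_of_nonneg_right (by linarith) hN0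
          rw [hcast, hcast2]
          have hMM : (1 : ℝ) ≤ (M : ℝ) := by exact_mod_cast hM1
          exact exponent_A R η n M hRη hN0 h2 hMM
      _ < Q ^ ((n * M : ℕ) : ℝ) / 2 := by
          rw [Real.rpow_sub hQ0,
            div_lt_div_iff₀ (by positivity : (0:ℝ) < Q ^ (2:ℝ)) two_pos]
          have h4 : (2 : ℝ) < Q ^ (2 : ℝ) := by
            have : (4 : ℝ) ≤ Q ^ (2 : ℝ) := by
              calc (4 : ℝ) = 2 ^ (2 : ℕ) := by norm_num
                _ ≤ Q ^ (2 : ℕ) := pow_le_pow_left₀ (by norm_num) hQ2 2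
                _ = Q ^ (2 : ℝ) := (Real.rpow_natCast Q 2).symm
            linarith
          exact mul_lt_mul_of_pos_left h4 (by positivity)
  have hB : (Bad2.card : ℝ) ≤ Q ^ ((n * M : ℕ) : ℝ) / 2 := by
    have b1 : ((2 ^ n : ℕ) : ℝ) ≤ Q ^ ((n : ℕ) : ℝ) := by
      rw [Real.rpow_natCast, Nat.cast_pow, Nat.cast_ofNat]
      exact pow_le_pow_left₀ (by norm_num) hQ2 n
    have hl2 : ℓ ≤ 2 ^ (ℓ - 1) := by
      have := (ℓ - 1).lt_two_pow_self; omega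
    have hlq : ℓ * q ^ ℓ ≤ q ^ (2 * ℓ - 1) := by
      calc ℓ * q ^ ℓ ≤ 2 ^ (ℓ - 1) * q ^ ℓ := Nat.mul_le_mul_right _ hl2
        _ ≤ q ^ (ℓ - 1) * q ^ ℓ := Nat.mul_le_mul_right _ (Nat.pow_le_pow_left hq2 _)
        _ = q ^ (ℓ - 1 + ℓ) := (pow_add q _ _).symm
        _ = q ^ (2 * ℓ - 1) := by congr 1; omega
    have b2n : (ℓ * q ^ ℓ) ^ n ≤ q ^ ((2 * ℓ - 1) * n) := by
      rw [pow_mul]; exact Nat.pow_le_pow_left hlq n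
    have b2 : (((ℓ * q ^ ℓ) ^ n : ℕ) : ℝ) ≤ Q ^ (((2 * ℓ - 1) * n : ℕ) : ℝ) := by
      rw [← hQpow]; exact_mod_cast b2n
    have hMle : ((2 * m : ℕ) : ℝ) ≤ Q ^ (R * n + 2) := by
      have h4 : (4 : ℝ) ≤ Q ^ (2 : ℝ) := by
        calc (4 : ℝ) = 2 ^ (2 : ℕ) := by norm_num
          _ ≤ Q ^ (2 : ℕ) := pow_le_pow_left₀ (by norm_num) hQ2 2
          _ = Q ^ (2 : ℝ) := (Real.rpow_natCast Q 2).symm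
      calc ((2 * m : ℕ) : ℝ) = 2 * (m : ℝ) := by push_cast; ring
        _ ≤ 4 * Q ^ (R * n) := by linarith only [hmle, hrpow1]
        _ ≤ Q ^ (2 : ℝ) * Q ^ (R * n) := mul_le_mul_of_nonneg_right h4 (by positivity)
        _ = Q ^ (R * n + 2) := by rw [← Real.rpow_add hQ0]; ring_nf
    have b3 : (((2 * m) ^ (L + 1) : ℕ) : ℝ) ≤ Q ^ ((R * n + 2) * ((L + 1 : ℕ) : ℝ)) := by
      rw [Nat.cast_pow]
      calc ((2 * m : ℕ) : ℝ) ^ (L + 1) ≤ (Q ^ (R * n + 2)) ^ (L + 1) :=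
            pow_le_pow_left₀ (by positivity) hMle _
        _ = Q ^ ((R * n + 2) * ((L + 1 : ℕ) : ℝ)) := by
            rw [Real.rpow_mul hQ0.le, Real.rpow_natCast]
    have hlt' : ((ℓ ^ t * q ^ (n - t) : ℕ) : ℝ) ≤
        Q ^ ((η / 2) * t + ((n - t : ℕ) : ℝ)) := by
      have e1 : ((ℓ : ℝ)) ^ t ≤ (Q ^ (η / 2)) ^ t :=
        pow_le_pow_left₀ (by positivity) hℓQ t
      have e2 : (Q ^ (η / 2)) ^ t = Q ^ ((η / 2) * t) := by
        rw [Real.rpow_mul hQ0.le, Real.rpow_natCast]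
      calc ((ℓ ^ t * q ^ (n - t) : ℕ) : ℝ)
          = (ℓ : ℝ) ^ t * ((q ^ (n - t) : ℕ) : ℝ) := by push_cast; ring
        _ ≤ Q ^ ((η / 2) * t) * Q ^ (((n - t : ℕ) : ℕ) : ℝ) := by
            apply mul_le_mul (e2 ▸ e1) (le_of_eq (hQpow _)) (by positivity) (by positivity)
        _ = Q ^ ((η / 2) * t + ((n - t : ℕ) : ℝ)) := (Real.rpow_add hQ0 _ _).symm
    have b4 : (((ℓ ^ t * q ^ (n - t)) ^ (L + 1) : ℕ) : ℝ) ≤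
        Q ^ (((η / 2) * t + ((n - t : ℕ) : ℝ)) * ((L + 1 : ℕ) : ℝ)) := by
      rw [Nat.cast_pow]
      calc ((ℓ ^ t * q ^ (n - t) : ℕ) : ℝ) ^ (L + 1)
          ≤ (Q ^ ((η / 2) * t + ((n - t : ℕ) : ℝ))) ^ (L + 1) :=
            pow_le_pow_left₀ (by positivity) hlt' _
        _ = _ := by rw [Real.rpow_mul hQ0.le, Real.rpow_natCast]
    have b5 : (((q ^ n) ^ (M - (L + 1)) : ℕ) : ℝ) = Q ^ ((n * (M - (L + 1)) : ℕ) : ℝ) := by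
      rw [← pow_mul]; exact hQpow _
    -- the key exponent inequality
    have h4l : 4 * (ℓ : ℝ) ≤ (L : ℝ) * η := by
      have hLL0 : (0 : ℝ) < (L : ℝ) := by
        have h1L : 1 ≤ L := le_trans hℓ hL
        exact_mod_cast Nat.lt_of_lt_of_le Nat.zero_lt_one h1L
      have := (div_le_iff₀ hLL0).mp hηL
      linarith only [this]
    have hE : (((n : ℕ) : ℝ)) + (((2 * ℓ - 1) * n : ℕ) : ℝ) +
        (R * n + 2) * ((L + 1 : ℕ) : ℝ) +
        (((η / 2) * t + ((n - t : ℕ) : ℝ)) * ((L + 1 : ℕ) : ℝ)) +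
        ((n * (M - (L + 1)) : ℕ) : ℝ) ≤ ((n * M : ℕ) : ℝ) - 1 := by
      have c1 : (((2 * ℓ - 1) * n : ℕ) : ℝ) = (2 * (ℓ : ℝ) - 1) * n := by
        push_cast [Nat.cast_sub (show 1 ≤ 2 * ℓ by omega)]; ring
      have c2 : ((n - t : ℕ) : ℝ) = (n : ℝ) - t := by
        push_cast [Nat.cast_sub htn]; ring
      have c3 : ((n * (M - (L + 1)) : ℕ) : ℝ) = (n : ℝ) * ((M : ℝ) - ((L : ℝ) + 1)) := by
        push_cast [Nat.cast_sub hLM]; ring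
      have c4 : ((n * M : ℕ) : ℝ) = (n : ℝ) * M := by push_cast; ring
      have c5 : ((L + 1 : ℕ) : ℝ) = (L : ℝ) + 1 := by push_cast; ring
      rw [c1, c2, c3, c4, c5]
      have hl1 : (1 : ℝ) ≤ (ℓ : ℝ) := by exact_mod_cast hℓ
      have hLL1 : (1 : ℝ) ≤ (L : ℝ) := by exact_mod_cast le_trans hℓ hL
      exact exponent_E R η (ℓ : ℝ) (L : ℝ) (n : ℝ) (t : ℝ) (M : ℝ)
        hR0 hRη hη hl1 hLL1 h4l hN0 htge h1
    calc (Bad2.card : ℝ) ≤ (((2 ^ n * ((ℓ * q ^ ℓ) ^ n * (2 * m) ^ (L + 1))) *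
            ((ℓ ^ t * q ^ (n - t)) ^ (L + 1) * (q ^ n) ^ (M - (L + 1))) : ℕ) : ℝ) :=
          Nat.cast_le.mpr hBad2
      _ = ((2 ^ n : ℕ) : ℝ) * ((((ℓ * q ^ ℓ) ^ n : ℕ) : ℝ) *
            (((2 * m) ^ (L + 1) : ℕ) : ℝ)) *
            ((((ℓ ^ t * q ^ (n - t)) ^ (L + 1) : ℕ) : ℝ) *
            (((q ^ n) ^ (M - (L + 1)) : ℕ) : ℝ)) := by push_cast; ring
      _ ≤ Q ^ (((n : ℕ) : ℝ)) * (Q ^ (((2 * ℓ - 1) * n : ℕ) : ℝ) *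
            Q ^ ((R * n + 2) * ((L + 1 : ℕ) : ℝ))) *
            (Q ^ (((η / 2) * t + ((n - t : ℕ) : ℝ)) * ((L + 1 : ℕ) : ℝ)) *
            Q ^ ((n * (M - (L + 1)) : ℕ) : ℝ)) := by
          have g1 := mul_le_mul b2 b3 (by positivity) (by positivity)
          have g2 := mul_le_mul b1 g1 (by positivity) (by positivity)
          have g3 := mul_le_mul b4 (le_of_eq b5) (by positivity) (by positivity)
          exact mul_le_mul g2 g3 (by positivity) (by positivity)
      _ = Q ^ ((((n : ℕ) : ℝ)) + (((2 * ℓ - 1) * n : ℕ) : ℝ) +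
            (R * n + 2) * ((L + 1 : ℕ) : ℝ) +
            (((η / 2) * t + ((n - t : ℕ) : ℝ)) * ((L + 1 : ℕ) : ℝ)) +
            ((n * (M - (L + 1)) : ℕ) : ℝ)) := by
          rw [← Real.rpow_add hQ0, ← Real.rpow_add hQ0, ← Real.rpow_add hQ0,
            ← Real.rpow_add hQ0]
          ring_nf
      _ ≤ Q ^ (((n * M : ℕ) : ℝ) - 1) := Real.rpow_le_rpow_of_exponent_le hQ1.le hE
      _ ≤ Q ^ ((n * M : ℕ) : ℝ) / 2 := by
          rw [Real.rpow_sub hQ0, Real.rpow_one]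
          apply div_le_div_of_nonneg_left (by positivity) (by norm_num) hQ2
  -- Step 4 : a good x exists
  have hlt : Bad1.card + Bad2.card < (Finset.univ : Finset (Fin M → Fin n → F)).card := by
    have hr : ((Bad1.card + Bad2.card : ℕ) : ℝ) <
        (((Finset.univ : Finset (Fin M → Fin n → F)).card : ℕ) : ℝ) := by
      rw [hTotalcard, Nat.cast_add]; linarith only [hA, hB]
    exact_mod_cast hr
  obtain ⟨x, hx1, hx2⟩ : ∃ x : Fin M → Fin n → F, x ∉ Bad1 ∧ x ∉ Bad2 := by
    have hne : ¬ ((Finset.univ : Finset (Fin M → Fin n → F)) ⊆ Bad1 ∪ Bad2) := by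
      intro hsub'
      have h1' := Finset.card_le_card hsub'
      have h2' := Finset.card_union_le Bad1 Bad2
      omega
    obtain ⟨x, -, hx⟩ := Finset.not_subset.mp hne
    exact ⟨x, fun h => hx (Finset.mem_union_left _ h),
      fun h => hx (Finset.mem_union_right _ h)⟩
  have hximg : m ≤ (Finset.univ.image x).card := by
    by_contra h
    push_neg at h
    exact hx1 (Finset.mem_filter.mpr ⟨Finset.mem_univ _, h⟩)
  have hxG2 : ∀ (T : Finset (Fin n)) (S : Fin n → Finset F), t ≤ T.card →
      (∀ j ∈ T, (S j).card ≤ ℓ) →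
      (Finset.univ.filter fun i : Fin M => ∀ j ∈ T, x i j ∈ S j).card ≤ L := by
    intro T S hT hS
    by_contra h
    push_neg at h
    exact hx2 (Finset.mem_filter.mpr ⟨Finset.mem_univ _, ⟨T, S, hT, hS, h⟩⟩)
  -- Step 5 : conclusion
  refine ⟨Set.range x, ?_, ?_⟩
  · have hrange : Set.range x = ↑(Finset.univ.image x) := by
      simp [Finset.coe_image]
    rw [hrange, Set.ncard_coe_finset]
    calc Q ^ (R * n) ≤ (m : ℝ) := hmge
      _ ≤ _ := Nat.cast_le.mpr hximg
  · intro S T hT hS _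
    have htT : t ≤ T.card := by
      apply Nat.ceil_le.mpr
      rwa [Fintype.card_fin] at hT
    have hD := hxG2 T S htT hS
    have hsub2 : {c ∈ Set.range x | ∀ i, c i ∈ S i} ⊆
        ↑((Finset.univ.filter fun i : Fin M => ∀ j ∈ T, x i j ∈ S j).image x) := by
      rintro c ⟨⟨i, rfl⟩, hc⟩
      exact Finset.mem_coe.mpr (Finset.mem_image.mpr ⟨i,
        Finset.mem_filter.mpr ⟨Finset.mem_univ _, fun j _ => hc j⟩, rfl⟩)
    calc {c ∈ Set.range x | ∀ i, c i ∈ S i}.ncard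
        ≤ (((Finset.univ.filter fun i : Fin M =>
            ∀ j ∈ T, x i j ∈ S j).image x : Finset (Fin n → F)) : Set (Fin n → F)).ncard :=
          Set.ncard_le_ncard hsub2 (Finset.finite_toSet _)
      _ = ((Finset.univ.filter fun i : Fin M =>
            ∀ j ∈ T, x i j ∈ S j).image x).card := Set.ncard_coe_finset _
      _ ≤ (Finset.univ.filter fun i : Fin M => ∀ j ∈ T, x i j ∈ S j).card :=
          Finset.card_image_le
      _ ≤ L := hD


/-- **List recovery capacity theorem (achievability).**  Let `R ∈ (0,1)`, `ℓ ≥ 1`, `L ≥ ℓ`,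
`η ≥ 4ℓ/L` with `R + η ≤ 1`, and let `F` be a finite field of cardinality `q ≥ ℓ^{2/η}`.
Then for all sufficiently large `n` there is a code `C ⊆ F^n` with `|C| ≥ q^{Rn}` which is
`(R + η, ℓ, L)`-list recoverable from erasures. -/
theorem list_recovery_capacity_achievability
    (F : Type) [Field F] [Fintype F]
    (R η : ℝ) (hR0 : 0 < R) (hR1 : R < 1)
    (ℓ L : ℕ) (hℓ : 1 ≤ ℓ) (hL : ℓ ≤ L)
    (hη : 0 < η) (hηL : (4 * ℓ : ℝ) / L ≤ η) (hRη : R + η ≤ 1)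
    (hq : (ℓ : ℝ) ^ ((2 : ℝ) / η) ≤ (Fintype.card F : ℝ)) :
    ∃ N : ℕ, ∀ n : ℕ, N ≤ n →
      ∃ C : Set (Fin n → F),
        (Fintype.card F : ℝ) ^ (R * n) ≤ (C.ncard : ℝ) ∧
        ListRecoverableErasures C (R + η) ℓ L := by
  classical
  letI : DecidableEq F := Classical.decEq F
  have hq1 : 1 < Fintype.card F := Fintype.one_lt_card
  set N1 : ℕ := ⌈(4 * L + 6 : ℝ) / η⌉₊ with hN1
  set N2 : ℕ := ⌈(5 : ℝ) / η⌉₊ with hN2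
  set N3 : ℕ := ⌈Real.logb 2 ((L : ℝ) + 1) / R⌉₊ with hN3
  refine ⟨max (max N1 N2) N3, fun n hn => ?_⟩
  have hn1 : N1 ≤ n := le_trans (le_trans (le_max_left _ _) (le_max_left _ _)) hn
  have hn2 : N2 ≤ n := le_trans (le_trans (le_max_right _ _) (le_max_left _ _)) hn
  have hn3 : N3 ≤ n := le_trans (le_max_right _ _) hn
  have h1 : (2 * L + 3 : ℝ) ≤ n * η / 2 := by
    have ha : (4 * L + 6 : ℝ) / η ≤ n := Nat.ceil_le.mp hn1
    have := (div_le_iff₀ hη).mp ha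
    linarith
  have h2 : (5 : ℝ) ≤ n * η := by
    have ha : (5 : ℝ) / η ≤ n := Nat.ceil_le.mp hn2
    have := (div_le_iff₀ hη).mp ha
    linarith
  have h3 : (L + 1 : ℝ) ≤ (Fintype.card F : ℝ) ^ (R * n) := by
    have ha : Real.logb 2 ((L : ℝ) + 1) / R ≤ n := Nat.ceil_le.mp hn3
    have hlog : Real.logb 2 ((L : ℝ) + 1) ≤ R * n := by
      rw [div_le_iff₀ hR0] at ha
      linarith
    have hL1 : (0 : ℝ) < (L : ℝ) + 1 := by positivity
    calc ((L : ℝ) + 1) = 2 ^ Real.logb 2 ((L : ℝ) + 1) :=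
          (Real.rpow_logb two_pos (by norm_num) hL1).symm
      _ ≤ 2 ^ (R * n) := Real.rpow_le_rpow_of_exponent_le (by norm_num) hlog
      _ ≤ (Fintype.card F : ℝ) ^ (R * n) :=
          Real.rpow_le_rpow (by norm_num) (by exact_mod_cast hq1) (by positivity)
  exact main_exists F R η hR0 hR1 ℓ L hℓ hL hη hηL hRη hq n h1 h2 h3
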